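/- arXiv:1910.05936 — 2 statements merged into one kernel-verified Lean document; each statement's English description precedes it below -/
import Mathlib

section
/- Let n be a non-negative integer. The set {∇_1, …, ∇_{⌈n/2⌉}} is a basis of HST(n), where ∇_k = ∇(bs_n(n-2k, -k)), whose (i,j)-entry equals C(-k + j - i, n - 2k + 1 - i) mod 2 for 1 ≤ i ≤ j ≤ n, for all k ∈ {1,…,⌊n/2⌋}, and, when n is odd, ∇_{(n+1)/2} = ∇((1)_n) with (1)_n the constant sequence of length n all of whose terms are 1. -/
open Finset

namespace Steinhaus

/-- Extended binomial coefficient `C(a,b)` for integers `a`, `b`: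
`C(a,0) = 1`, `C(0,b) = 0` for `b > 0`, Pascal's rule everywhere; in particular
`C(a,b) = 0` for `b < 0` and `C(a,b) = (-1)^b C(b-a-1,b)` for `a < 0 ≤ b`. -/
def ibinom (a b : ℤ) : ℤ :=
  if b < 0 then 0
  else if 0 ≤ a then (a.toNat.choose b.toNat : ℤ)
  else (-1) ^ b.toNat * ((b - a - 1).toNat.choose b.toNat : ℤ)

/-- `(i,j)` is an index of the triangle of size `n`, i.e. `1 ≤ i ≤ j ≤ n`. -/
def InTri (n i j : ℕ) : Prop := 1 ≤ i ∧ i ≤ j ∧ j ≤ n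

instance (n i j : ℕ) : Decidable (InTri n i j) :=
  inferInstanceAs (Decidable (1 ≤ i ∧ i ≤ j ∧ j ≤ n))

/-- The `ZMod 2`-vector space of binary Steinhaus triangles of size `n`,
realized as functions `ℕ → ℕ → ZMod 2` vanishing outside the triangle
`{(i,j) | 1 ≤ i ≤ j ≤ n}` and satisfying the local rule
`a i j = a (i-1) (j-1) + a (i-1) j` inside it. -/
def ST (n : ℕ) : Submodule (ZMod 2) (ℕ → ℕ → ZMod 2) where
  carrier := {a | (∀ i j, ¬ InTri n i j → a i j = 0) ∧
    ∀ i j, 2 ≤ i → i ≤ j → j ≤ n → a i j = a (i - 1) (j - 1) + a (i - 1) j}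
  add_mem' := by
    rintro a b ⟨ha0, ha1⟩ ⟨hb0, hb1⟩
    refine ⟨fun i j h => ?_, fun i j h2 hij hjn => ?_⟩
    · simp only [Pi.add_apply, ha0 i j h, hb0 i j h, add_zero]
    · simp only [Pi.add_apply, ha1 i j h2 hij hjn, hb1 i j h2 hij hjn]
      ring
  zero_mem' := ⟨fun _ _ _ => rfl, fun _ _ _ _ _ => by simp⟩
  smul_mem' := by
    rintro c a ⟨ha0, ha1⟩
    refine ⟨fun i j h => ?_, fun i j h2 hij hjn => ?_⟩
    · simp only [Pi.smul_apply, ha0 i j h, smul_zero]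
    · simp only [Pi.smul_apply, ha1 i j h2 hij hjn, smul_add]

/-- The first row of the triangle `a` (of size `n`) is the sequence `S`;
equivalently, `a = ∇S`. -/
def FirstRow (n : ℕ) (a : ℕ → ℕ → ZMod 2) (S : ℕ → ZMod 2) : Prop :=
  ∀ j, 1 ≤ j → j ≤ n → a 1 j = S j

/-- The rotation `r` by 120 degrees: `r(a)_{i,j} = a_{j-i+1, n-i+1}`. -/
def rot (n : ℕ) (a : ℕ → ℕ → ZMod 2) : ℕ → ℕ → ZMod 2 :=
  fun i j => if InTri n i j then a (j - i + 1) (n - i + 1) else 0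

/-- The horizontal reflection `h`: `h(a)_{i,j} = a_{i, n-j+i}`. -/
def hrefl (n : ℕ) (a : ℕ → ℕ → ZMod 2) : ℕ → ℕ → ZMod 2 :=
  fun i j => if InTri n i j then a i (n - j + i) else 0

lemma rot_add (n : ℕ) (a b : ℕ → ℕ → ZMod 2) :
    rot n (a + b) = rot n a + rot n b := by
  funext i j
  simp only [rot, Pi.add_apply]
  split_ifs <;> simp

lemma rot_smul (n : ℕ) (c : ZMod 2) (a : ℕ → ℕ → ZMod 2) :
    rot n (c • a) = c • rot n a := by
  funext i j
  simp only [rot, Pi.smul_apply]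
  split_ifs <;> simp

lemma hrefl_add (n : ℕ) (a b : ℕ → ℕ → ZMod 2) :
    hrefl n (a + b) = hrefl n a + hrefl n b := by
  funext i j
  simp only [hrefl, Pi.add_apply]
  split_ifs <;> simp

lemma hrefl_smul (n : ℕ) (c : ZMod 2) (a : ℕ → ℕ → ZMod 2) :
    hrefl n (c • a) = c • hrefl n a := by
  funext i j
  simp only [hrefl, Pi.smul_apply]
  split_ifs <;> simp

/-- The linear map `ρ = r² + r + id`. -/
def rho (n : ℕ) (a : ℕ → ℕ → ZMod 2) : ℕ → ℕ → ZMod 2 :=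
  rot n (rot n a) + rot n a + a

/-- The subspace of rotationally symmetric Steinhaus triangles (fixed by `r`). -/
def RST (n : ℕ) : Submodule (ZMod 2) (ℕ → ℕ → ZMod 2) where
  carrier := {a | a ∈ ST n ∧ rot n a = a}
  add_mem' := by
    rintro a b ⟨ha, ha'⟩ ⟨hb, hb'⟩
    exact ⟨add_mem ha hb, by rw [rot_add, ha', hb']⟩
  zero_mem' := ⟨zero_mem _, by funext i j; simp [rot]⟩
  smul_mem' := by
    rintro c a ⟨ha, ha'⟩
    exact ⟨Submodule.smul_mem _ c ha, by rw [rot_smul, ha']⟩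

/-- The subspace of horizontally symmetric Steinhaus triangles (fixed by `h`). -/
def HST (n : ℕ) : Submodule (ZMod 2) (ℕ → ℕ → ZMod 2) where
  carrier := {a | a ∈ ST n ∧ hrefl n a = a}
  add_mem' := by
    rintro a b ⟨ha, ha'⟩ ⟨hb, hb'⟩
    exact ⟨add_mem ha hb, by rw [hrefl_add, ha', hb']⟩
  zero_mem' := ⟨zero_mem _, by funext i j; simp [hrefl]⟩
  smul_mem' := by
    rintro c a ⟨ha, ha'⟩
    exact ⟨Submodule.smul_mem _ c ha, by rw [hrefl_smul, ha']⟩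

/-- The subspace of dihedrally symmetric Steinhaus triangles (fixed by `r` and `h`). -/
def DST (n : ℕ) : Submodule (ZMod 2) (ℕ → ℕ → ZMod 2) where
  carrier := {a | a ∈ ST n ∧ rot n a = a ∧ hrefl n a = a}
  add_mem' := by
    rintro a b ⟨ha, ha', ha''⟩ ⟨hb, hb', hb''⟩
    exact ⟨add_mem ha hb, by rw [rot_add, ha', hb'], by rw [hrefl_add, ha'', hb'']⟩
  zero_mem' := ⟨zero_mem _, by funext i j; simp [rot], by funext i j; simp [hrefl]⟩
  smul_mem' := by
    rintro c a ⟨ha, ha', ha''⟩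
    exact ⟨Submodule.smul_mem _ c ha, by rw [rot_smul, ha'],
      by rw [hrefl_smul, ha'']⟩

/-- `σ₂`: the sum of the first `n` terms of a sequence over `ZMod 2`. -/
def seqSum (n : ℕ) (S : ℕ → ZMod 2) : ZMod 2 := ∑ j ∈ Finset.Icc 1 n, S j

/-- The subspace `DST₀(n)` of dihedrally symmetric Steinhaus triangles whose
first row has zero sum. -/
def DST0 (n : ℕ) : Submodule (ZMod 2) (ℕ → ℕ → ZMod 2) where
  carrier := {a | a ∈ DST n ∧ seqSum n (a 1) = 0}
  add_mem' := by
    rintro a b ⟨ha, ha'⟩ ⟨hb, hb'⟩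
    refine ⟨add_mem ha hb, ?_⟩
    have h : seqSum n ((a + b) 1) = seqSum n (a 1) + seqSum n (b 1) := by
      simp [seqSum, Finset.sum_add_distrib]
    rw [h, ha', hb', add_zero]
  zero_mem' := ⟨zero_mem _, by simp [seqSum]⟩
  smul_mem' := by
    rintro c a ⟨ha, ha'⟩
    refine ⟨Submodule.smul_mem _ c ha, ?_⟩
    have h : seqSum n ((c • a) 1) = c • seqSum n (a 1) := by
      simp [seqSum, smul_eq_mul, Finset.mul_sum]
    rw [h, ha', smul_zero]

/-- The derived sequence `∂S`. -/
def der (S : ℕ → ZMod 2) : ℕ → ZMod 2 := fun j => S j + S (j + 1)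

/-- The antiderived sequence `∫_{i,x} S`, whose `j`-th term is
`x + Σ_{k=1}^{i-1} S k + Σ_{k=1}^{j-1} S k`. -/
def antider (i : ℕ) (x : ZMod 2) (S : ℕ → ZMod 2) : ℕ → ZMod 2 :=
  fun j => x + (∑ k ∈ Finset.Ico 1 i, S k) + (∑ k ∈ Finset.Ico 1 j, S k)

/-- A sequence of length `n` is symmetric. -/
def SymmSeq (n : ℕ) (S : ℕ → ZMod 2) : Prop :=
  ∀ j, 1 ≤ j → j ≤ n → S (n - j + 1) = S j

/-- The binomial sequence `bs(k,l)` whose `j`-th term is `C(l+j-1, k) mod 2`. -/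
def bseq (k l : ℤ) : ℕ → ZMod 2 := fun j => ((ibinom (l + (j : ℤ) - 1) k : ℤ) : ZMod 2)

/-- The map `H : ST(n) → ST(n-3)` removing the first row and the two sides. -/
def Hmap (n : ℕ) (a : ℕ → ℕ → ZMod 2) : ℕ → ℕ → ZMod 2 :=
  fun i j => if InTri (n - 3) i j then a (1 + i) (2 + j) else 0

/-- The projection `π_G` of a subspace `V` of triangles onto coordinates in `G`. -/
def proj (V : Submodule (ZMod 2) (ℕ → ℕ → ZMod 2)) (G : Set (ℕ × ℕ)) :
    V →ₗ[ZMod 2] (G → ZMod 2) where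
  toFun a := fun p => (a : ℕ → ℕ → ZMod 2) p.1.1 p.1.2
  map_add' := fun _ _ => rfl
  map_smul' := fun _ _ => rfl

/-- `G` is a generating index set of the subspace `V` of `ST(n)`:
`G` consists of triangle indices and `π_G : V → (ZMod 2)^G` is an isomorphism. -/
def IsGenIndexSet (n : ℕ) (V : Submodule (ZMod 2) (ℕ → ℕ → ZMod 2))
    (G : Set (ℕ × ℕ)) : Prop :=
  (∀ p ∈ G, InTri n p.1 p.2) ∧ Function.Bijective (proj V G)

end Steinhaus
namespace Steinhaus

lemma ibinom_of_neg (a b : ℤ) (hb : b < 0) : ibinom a b = 0 := by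
  simp [ibinom, hb]

lemma ibinom_of_nonneg (a b : ℤ) (ha : 0 ≤ a) (hb : 0 ≤ b) :
    ibinom a b = (a.toNat.choose b.toNat : ℤ) := by
  simp [ibinom, ha, not_lt.mpr hb]

lemma ibinom_of_neg_left (a b : ℤ) (ha : a < 0) (hb : 0 ≤ b) :
    ibinom a b = (-1) ^ b.toNat * ((b - a - 1).toNat.choose b.toNat : ℤ) := by
  simp [ibinom, not_le.mpr ha, not_lt.mpr hb]

lemma neg_one_zmod2 : ((-1 : ZMod 2)) = 1 := by decide

/-- mod-2 Pascal identity for the extended binomial coefficient. -/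
lemma ibinom_pascal (a b : ℤ) :
    ((ibinom a b : ℤ) : ZMod 2) =
      ((ibinom (a-1) (b-1) : ℤ) : ZMod 2) + ((ibinom (a-1) b : ℤ) : ZMod 2) := by
  rcases lt_or_ge b 0 with hb | hb
  · rw [ibinom_of_neg _ _ hb, ibinom_of_neg (a-1) (b-1) (by omega), ibinom_of_neg _ _ hb]; simp
  rcases hb.eq_or_lt with hb0 | hbpos
  · -- b = 0
    have hb0 : b = 0 := hb0.symm
    subst hb0
    rw [ibinom_of_neg (a-1) (0-1) (by norm_num)]
    rcases le_or_gt 0 a with ha | ha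
    · rcases le_or_gt 1 a with ha1 | ha1
      · rw [ibinom_of_nonneg _ _ ha le_rfl, ibinom_of_nonneg _ _ (by omega) le_rfl]; simp
      · have : a = 0 := by omega
        subst this
        rw [ibinom_of_nonneg _ _ le_rfl le_rfl, ibinom_of_neg_left _ _ (by norm_num) le_rfl]
        simp
    · rw [ibinom_of_neg_left _ _ ha le_rfl, ibinom_of_neg_left _ _ (by omega) le_rfl]
      simp
  · -- b > 0
    rcases lt_trichotomy a 0 with ha | ha | ha
    · rw [ibinom_of_neg_left _ _ ha hb, ibinom_of_neg_left _ _ (by omega) (by omega),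
        ibinom_of_neg_left _ _ (by omega) hb]
      have h1 : (b - (a-1) - 1).toNat = (b - a - 1).toNat + 1 := by omega
      have h3 : (b - 1 - (a - 1) - 1).toNat = (b - a - 1).toNat := by omega
      have hbt : b.toNat = (b-1).toNat + 1 := by omega
      rw [h1, h3, hbt, Nat.choose_succ_succ']
      push_cast
      simp only [neg_one_zmod2, one_pow, one_mul]
      rw [← add_assoc, CharTwo.add_self_eq_zero, zero_add]
    · subst ha
      rw [ibinom_of_nonneg _ _ le_rfl hb, ibinom_of_neg_left _ _ (by norm_num) (by omega),
        ibinom_of_neg_left _ _ (by norm_num) hb]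
      have h0 : (0 : ℤ).toNat.choose b.toNat = 0 :=
        Nat.choose_eq_zero_of_lt (by omega)
      rw [h0]
      have h1 : (b - 1 - (0 - 1) - 1).toNat = (b-1).toNat := by omega
      have h2 : (b - (0-1) - 1).toNat = b.toNat := by omega
      rw [h1, h2, Nat.choose_self, Nat.choose_self]
      push_cast
      simp only [neg_one_zmod2, one_pow]
      ring_nf
      decide
    · rw [ibinom_of_nonneg _ _ (by omega) hb, ibinom_of_nonneg _ _ (by omega) (by omega),
        ibinom_of_nonneg _ _ (by omega) hb]
      have h1 : a.toNat = (a-1).toNat + 1 := by omega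
      have h2 : b.toNat = (b-1).toNat + 1 := by omega
      rw [h1, h2, Nat.choose_succ_succ]
      push_cast
      ring

/-- mod-2 reflection identity. -/
lemma ibinom_refl (a b : ℤ) :
    ((ibinom a b : ℤ) : ZMod 2) = ((ibinom (b - 1 - a) b : ℤ) : ZMod 2) := by
  rcases lt_or_ge b 0 with hb | hb
  · rw [ibinom_of_neg _ _ hb, ibinom_of_neg _ _ hb]
  rcases lt_or_ge a 0 with ha | ha
  · rw [ibinom_of_neg_left _ _ ha hb, ibinom_of_nonneg _ _ (by omega) hb]
    have : (b - a - 1).toNat = (b - 1 - a).toNat := by omega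
    rw [this]
    push_cast
    simp only [neg_one_zmod2, one_pow, one_mul]
  rcases lt_or_ge (b - 1 - a) 0 with ha2 | ha2
  · rw [ibinom_of_neg_left _ _ ha2 hb, ibinom_of_nonneg _ _ ha hb]
    have : (b - (b - 1 - a) - 1).toNat = a.toNat := by omega
    rw [this]
    push_cast
    simp only [neg_one_zmod2, one_pow, one_mul]
  · rw [ibinom_of_nonneg _ _ ha hb, ibinom_of_nonneg _ _ ha2 hb]
    have h1 : a.toNat.choose b.toNat = 0 := Nat.choose_eq_zero_of_lt (by omega)
    have h2 : (b - 1 - a).toNat.choose b.toNat = 0 := Nat.choose_eq_zero_of_lt (by omega)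
    rw [h1, h2]

/-- Uniqueness: a Steinhaus triangle is determined by its first row. -/
lemma ST_ext {n : ℕ} {a b : ℕ → ℕ → ZMod 2} (ha : a ∈ ST n) (hb : b ∈ ST n)
    (h : ∀ j, 1 ≤ j → j ≤ n → a 1 j = b 1 j) : a = b := by
  obtain ⟨ha0, ha1⟩ := ha
  obtain ⟨hb0, hb1⟩ := hb
  have key : ∀ i, 1 ≤ i → ∀ j, i ≤ j → j ≤ n → a i j = b i j := by
    intro i hi
    induction i, hi using Nat.le_induction with
    | base => exact fun j hj hjn => h j hj hjn
    | succ i hi ih =>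
      intro j hj hjn
      rw [ha1 (i+1) j (by omega) (by omega) hjn, hb1 (i+1) j (by omega) (by omega) hjn]
      simp only [Nat.add_sub_cancel]
      rw [ih (j-1) (by omega) (by omega), ih j (by omega) hjn]
  funext i j
  by_cases hij : InTri n i j
  · exact key i hij.1 j hij.2.1 hij.2.2
  · rw [ha0 i j hij, hb0 i j hij]

lemma hrefl_mem_ST {n : ℕ} {a : ℕ → ℕ → ZMod 2} (ha : a ∈ ST n) : hrefl n a ∈ ST n := by
  obtain ⟨ha0, ha1⟩ := ha
  constructor
  · intro i j h; simp [hrefl, h]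
  · intro i j h2 hij hjn
    have t1 : InTri n i j := ⟨by omega, hij, hjn⟩
    have t2 : InTri n (i-1) (j-1) := ⟨by omega, by omega, by omega⟩
    have t3 : InTri n (i-1) j := ⟨by omega, by omega, hjn⟩
    simp only [hrefl, if_pos t1, if_pos t2, if_pos t3]
    have e1 : n - (j-1) + (i-1) = n - j + i := by omega
    have e2 : n - j + (i - 1) = (n - j + i) - 1 := by omega
    rw [e1, e2]
    rw [ha1 i (n - j + i) h2 (by omega) (by omega), add_comm]

/-- A triangle in `ST n` whose first row is symmetric is horizontally symmetric. -/
lemma mem_HST_of_symm {n : ℕ} {a : ℕ → ℕ → ZMod 2} (ha : a ∈ ST n)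
    (hs : ∀ j, 1 ≤ j → j ≤ n → a 1 (n - j + 1) = a 1 j) : a ∈ HST n := by
  refine ⟨ha, ?_⟩
  refine ST_ext (hrefl_mem_ST ha) ha ?_
  intro j hj hjn
  have t1 : InTri n 1 j := ⟨le_rfl, hj, hjn⟩
  simp only [hrefl, if_pos t1]
  exact hs j hj hjn



/-- Theorem 5. The set `{∇_1,…,∇_{⌈n/2⌉}}` is a basis of
`HST(n)`, where `∇_k = ∇(bs_n(n-2k, -k))` with `(i,j)`-entry
`C(-k+j-i, n-2k+1-i) mod 2` for `k ∈ {1,…,⌊n/2⌋}`, and where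
`∇_{(n+1)/2} = ∇((1)_n)` when `n` is odd.  Each `T k` denotes `∇_k`, specified
by membership in `ST(n)` and its first row. -/
theorem statement12 (n : ℕ) (T : ℕ → ℕ → ℕ → ZMod 2)
    (hT : ∀ k, 1 ≤ k → k ≤ n / 2 →
      T k ∈ ST n ∧ FirstRow n (T k) (bseq ((n : ℤ) - 2 * (k : ℤ)) (-(k : ℤ))))
    (hodd : n % 2 = 1 →
      T ((n + 1) / 2) ∈ ST n ∧ FirstRow n (T ((n + 1) / 2)) (fun _ => 1)) :
    (∃ b : Module.Basis (Fin ((n + 1) / 2)) (ZMod 2) (HST n),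
      ∀ k : Fin ((n + 1) / 2), (b k : ℕ → ℕ → ZMod 2) = T ((k : ℕ) + 1)) ∧
    ∀ k, 1 ≤ k → k ≤ n / 2 → ∀ i j, 1 ≤ i → i ≤ j → j ≤ n →
      T k i j = ((ibinom (-(k : ℤ) + (j : ℤ) - (i : ℤ))
        ((n : ℤ) - 2 * (k : ℤ) + 1 - (i : ℤ)) : ℤ) : ZMod 2) := by
  classical
  set m := (n + 1) / 2 with hm
  -- Part 2: the explicit entry formula.
  have hform : ∀ k, 1 ≤ k → k ≤ n / 2 → ∀ i j, 1 ≤ i → i ≤ j → j ≤ n →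
      T k i j = ((ibinom (-(k : ℤ) + (j : ℤ) - (i : ℤ))
        ((n : ℤ) - 2 * (k : ℤ) + 1 - (i : ℤ)) : ℤ) : ZMod 2) := by
    intro k hk1 hk2
    obtain ⟨⟨h0, h1⟩, hrow⟩ := hT k hk1 hk2
    have key : ∀ i, 1 ≤ i → ∀ j, i ≤ j → j ≤ n →
        T k i j = ((ibinom (-(k : ℤ) + (j : ℤ) - (i : ℤ))
          ((n : ℤ) - 2 * (k : ℤ) + 1 - (i : ℤ)) : ℤ) : ZMod 2) := by
      intro i hi
      induction i, hi using Nat.le_induction with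
      | base =>
        intro j hj hjn
        rw [hrow j hj hjn]
        unfold bseq
        norm_num
      | succ i hi ih =>
        intro j hj hjn
        rw [h1 (i+1) j (by omega) (by omega) hjn]
        simp only [Nat.add_sub_cancel]
        rw [ih (j-1) (by omega) (by omega), ih j (by omega) hjn]
        have hp := ibinom_pascal (-(k : ℤ) + (j : ℤ) - (i : ℤ))
          ((n : ℤ) - 2 * (k : ℤ) + 1 - (i : ℤ))
        have e1 : (-(k : ℤ) + ((j:ℕ)-1 : ℕ) - (i : ℤ)) = (-(k : ℤ) + (j : ℤ) - (i : ℤ)) - 1 := by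
          have : ((j - 1 : ℕ) : ℤ) = (j : ℤ) - 1 := by omega
          rw [this]; ring
        have e2 : ((n : ℤ) - 2 * (k : ℤ) + 1 - ((i:ℕ)+1 : ℕ)) =
            ((n : ℤ) - 2 * (k : ℤ) + 1 - (i : ℤ)) - 1 := by push_cast; ring
        have e3 : (-(k : ℤ) + (j : ℤ) - ((i:ℕ)+1 : ℕ)) =
            (-(k : ℤ) + (j : ℤ) - (i : ℤ)) - 1 := by push_cast; ring
        rw [e1, e2, e3, hp, add_comm (((ibinom (-(k:ℤ) + (j:ℤ) - (i:ℤ) - 1)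
          ((n:ℤ) - 2*(k:ℤ) + 1 - (i:ℤ) - 1) : ℤ) : ZMod 2)), ← add_assoc,
          CharTwo.add_self_eq_zero, zero_add]
    exact fun i j h1 h2 h3 => key i h1 j h2 h3
  refine ⟨?_, hform⟩
  -- Row values of T (k+1) for k : Fin m.
  have hrowval : ∀ k : Fin m, ∀ j, 1 ≤ j → j ≤ n →
      T ((k:ℕ)+1) 1 j = (if (k:ℕ)+1 ≤ n/2 then
        ((ibinom ((j:ℤ) - (k:ℤ) - 2) ((n:ℤ) - 2*(k:ℤ) - 2) : ℤ) : ZMod 2) else 1) := by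
    intro k j hj hjn
    by_cases hk : (k:ℕ)+1 ≤ n/2
    · rw [if_pos hk, (hT ((k:ℕ)+1) (by omega) hk).2 j hj hjn]
      unfold bseq
      congr 2 <;> push_cast <;> ring
    · have hodd' : n % 2 = 1 := by omega
      have hkm : (k:ℕ)+1 = m := by have := k.isLt; omega
      rw [if_neg hk, hkm, (hodd hodd').2 j hj hjn]
  -- Membership of the T's in HST n.
  have hst : ∀ k : Fin m, T ((k:ℕ)+1) ∈ ST n := by
    intro k
    by_cases hk : (k:ℕ)+1 ≤ n/2
    · exact (hT ((k:ℕ)+1) (by omega) hk).1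
    · have hodd' : n % 2 = 1 := by omega
      have hkm : (k:ℕ)+1 = m := by have := k.isLt; omega
      rw [hkm]; exact (hodd hodd').1
  have hhst : ∀ k : Fin m, T ((k:ℕ)+1) ∈ HST n := by
    intro k
    refine mem_HST_of_symm (hst k) ?_
    intro j hj hjn
    rw [hrowval k j hj hjn, hrowval k (n - j + 1) (by omega) (by omega)]
    by_cases hk : (k:ℕ)+1 ≤ n/2
    · rw [if_pos hk, if_pos hk]
      have e1 : ((n - j + 1 : ℕ) : ℤ) - (k:ℤ) - 2 =
          ((n:ℤ) - 2*(k:ℤ) - 2) - 1 - ((j:ℤ) - (k:ℤ) - 2) := by omega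
      rw [e1, ← ibinom_refl]
    · rw [if_neg hk, if_neg hk]
  -- Diagonal and strictly upper entries (in columns 1..m) of the row matrix.
  have hdiag : ∀ k : Fin m, T ((k:ℕ)+1) 1 ((k:ℕ)+1) = 1 := by
    intro k
    have hkn : (k:ℕ)+1 ≤ n := by have := k.isLt; omega
    rw [hrowval k ((k:ℕ)+1) (by omega) hkn]
    by_cases hk : (k:ℕ)+1 ≤ n/2
    · rw [if_pos hk]
      have hb : (0:ℤ) ≤ (n:ℤ) - 2*(k:ℤ) - 2 := by omega
      have e : (((k:ℕ)+1 : ℕ) : ℤ) - (k:ℤ) - 2 = -1 := by push_cast; ring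
      rw [e, ibinom_of_neg_left _ _ (by norm_num) hb]
      have e2 : ((n:ℤ) - 2*(k:ℤ) - 2 - (-1) - 1).toNat = ((n:ℤ) - 2*(k:ℤ) - 2).toNat := by omega
      rw [e2, Nat.choose_self]
      push_cast
      simp [neg_one_zmod2]
    · rw [if_neg hk]
  have hupper : ∀ k j : Fin m, (k:ℕ) < (j:ℕ) → T ((k:ℕ)+1) 1 ((j:ℕ)+1) = 0 := by
    intro k j hkj
    have hjn : (j:ℕ)+1 ≤ n := by have := j.isLt; omega
    rw [hrowval k ((j:ℕ)+1) (by omega) hjn]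
    have hk : (k:ℕ)+1 ≤ n/2 := by
      have hj := j.isLt
      have hk' := k.isLt
      omega
    rw [if_pos hk]
    have ha : (0:ℤ) ≤ (((j:ℕ)+1 : ℕ) : ℤ) - (k:ℤ) - 2 := by omega
    have hb : (0:ℤ) ≤ (n:ℤ) - 2*(k:ℤ) - 2 := by omega
    rw [ibinom_of_nonneg _ _ ha hb]
    have hlt : ((((j:ℕ)+1 : ℕ) : ℤ) - (k:ℤ) - 2).toNat < ((n:ℤ) - 2*(k:ℤ) - 2).toNat := by
      have hj := j.isLt
      omega
    rw [Nat.choose_eq_zero_of_lt hlt]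
    simp
  -- The projection onto the first half of the first row.
  let φ : HST n →ₗ[ZMod 2] (Fin m → ZMod 2) :=
    { toFun := fun a => fun j => (a : ℕ → ℕ → ZMod 2) 1 ((j:ℕ) + 1)
      map_add' := fun a b => rfl
      map_smul' := fun c a => rfl }
  let Tf : Fin m → HST n := fun k => ⟨T ((k:ℕ)+1), hhst k⟩
  -- φ is injective.
  have hinj : Function.Injective φ := by
    rw [← LinearMap.ker_eq_bot, LinearMap.ker_eq_bot']
    intro a ha
    have h0 : ∀ j, 1 ≤ j → j ≤ m → (a : ℕ → ℕ → ZMod 2) 1 j = 0 := by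
      intro j hj hjm
      have := congrFun ha ⟨j - 1, by omega⟩
      simpa [φ, show j - 1 + 1 = j by omega] using this
    have h1 : ∀ j, 1 ≤ j → j ≤ n → (a : ℕ → ℕ → ZMod 2) 1 j = 0 := by
      intro j hj hjn
      by_cases hjm : j ≤ m
      · exact h0 j hj hjm
      · have hsym := a.2.2
        have t1 : InTri n 1 j := ⟨le_rfl, hj, hjn⟩
        have := congrFun (congrFun hsym 1) j
        rw [hrefl, if_pos t1] at this
        rw [← this]
        exact h0 (n - j + 1) (by omega) (by omega)
    have : (a : ℕ → ℕ → ZMod 2) = 0 := by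
      refine ST_ext a.2.1 (zero_mem (ST n)) ?_
      intro j hj hjn
      rw [h1 j hj hjn]; rfl
    exact Subtype.ext this
  -- The triangular matrix of first-row values.
  let M : Matrix (Fin m) (Fin m) (ZMod 2) := fun k j => T ((k:ℕ)+1) 1 ((j:ℕ)+1)
  have hMdet : M.det = 1 := by
    have htri : M.BlockTriangular OrderDual.toDual := by
      intro i j hij
      exact hupper i j hij
    rw [Matrix.det_of_lowerTriangular M htri]
    have : ∀ k : Fin m, M k k = 1 := fun k => hdiag k
    simp [this]
  have hMunit : IsUnit M := (Matrix.isUnit_iff_isUnit_det M).mpr (by rw [hMdet]; exact isUnit_one)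
  have hli : LinearIndependent (ZMod 2) (fun k => φ (Tf k)) := by
    have : (fun k => φ (Tf k)) = fun k => M k := rfl
    rw [this]
    exact Matrix.linearIndependent_rows_iff_isUnit.mpr hMunit
  have hspan : ⊤ ≤ Submodule.span (ZMod 2) (Set.range fun k => φ (Tf k)) := by
    intro x _
    obtain ⟨c, rfl⟩ := (Matrix.vecMul_surjective_iff_isUnit.mpr hMunit) x
    have : M.vecMul c = ∑ k, c k • (fun j => M k j) := by
      funext j
      simp [Matrix.vecMul, dotProduct, Finset.sum_apply]
    show M.vecMul c ∈ _
    rw [this]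
    exact Submodule.sum_mem _ fun k _ => Submodule.smul_mem _ _
      (Submodule.subset_span ⟨k, rfl⟩)
  let e' : Module.Basis (Fin m) (ZMod 2) (Fin m → ZMod 2) := Module.Basis.mk hli hspan
  have he' : ∀ k, e' k = φ (Tf k) := fun k => Module.Basis.mk_apply hli hspan k
  -- φ is surjective.
  have hsurj : Function.Surjective φ := by
    rw [← LinearMap.range_eq_top, ← top_le_iff, ← e'.span_eq, Submodule.span_le]
    rintro _ ⟨k, rfl⟩
    rw [he' k]
    exact ⟨Tf k, rfl⟩
  let eqv : HST n ≃ₗ[ZMod 2] (Fin m → ZMod 2) := LinearEquiv.ofBijective φ ⟨hinj, hsurj⟩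
  refine ⟨e'.map eqv.symm, ?_⟩
  intro k
  have : (e'.map eqv.symm) k = Tf k := by
    rw [Module.Basis.map_apply, he' k]
    have : φ (Tf k) = eqv (Tf k) := rfl
    rw [this, LinearEquiv.symm_apply_apply]
  rw [this]


end Steinhaus
end

section
/- Let n be a non-negative integer. If n is even, then DST(n) = DST₀(n). If n is odd, then DST(n) is the disjoint union of DST₀(n) and the coset DST₀(n) + U_n. -/
open Finset

namespace Steinhaus


lemma mem_ST_iff {n : ℕ} {a : ℕ → ℕ → ZMod 2} : a ∈ ST n ↔
    (∀ i j, ¬ InTri n i j → a i j = 0) ∧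
    ∀ i j, 2 ≤ i → i ≤ j → j ≤ n → a i j = a (i - 1) (j - 1) + a (i - 1) j :=
  Iff.rfl

lemma mem_DST_iff {n : ℕ} {a : ℕ → ℕ → ZMod 2} :
    a ∈ DST n ↔ a ∈ ST n ∧ rot n a = a ∧ hrefl n a = a := Iff.rfl

lemma mem_DST0_iff {n : ℕ} {a : ℕ → ℕ → ZMod 2} :
    a ∈ DST0 n ↔ a ∈ DST n ∧ seqSum n (a 1) = 0 := Iff.rfl

lemma mk_inTri {n i j : ℕ} (h : 1 ≤ i ∧ i ≤ j ∧ j ≤ n) : InTri n i j := h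

lemma inTri_elim {n i j : ℕ} (h : InTri n i j) : 1 ≤ i ∧ i ≤ j ∧ j ≤ n := h

lemma flip2 : ∀ A B C : ZMod 2, C = A + B → A = B + C := by decide

lemma zmod2_add_self (z : ZMod 2) : z + z = 0 := by
  revert z; decide

lemma rot_outside {n : ℕ} {a : ℕ → ℕ → ZMod 2} {i j : ℕ} (h : ¬ InTri n i j) :
    rot n a i j = 0 := if_neg h

lemma hrefl_outside {n : ℕ} {a : ℕ → ℕ → ZMod 2} {i j : ℕ} (h : ¬ InTri n i j) :
    hrefl n a i j = 0 := if_neg h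

lemma rot_apply (n : ℕ) (a : ℕ → ℕ → ZMod 2) {i j : ℕ} (h : InTri n i j) :
    rot n a i j = a (j - i + 1) (n - i + 1) := if_pos h

lemma hrefl_apply (n : ℕ) (a : ℕ → ℕ → ZMod 2) {i j : ℕ} (h : InTri n i j) :
    hrefl n a i j = a i (n - j + i) := if_pos h

lemma rot_rot_apply (n : ℕ) (a : ℕ → ℕ → ZMod 2) {i j : ℕ} (h : InTri n i j) :
    rot n (rot n a) i j = a (n - j + 1) (n - j + i) := by
  obtain ⟨h1, h2, h3⟩ := inTri_elim h
  rw [rot_apply n (rot n a) h, rot_apply n a (mk_inTri (by omega))]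
  congr 1 <;> omega

lemma rot_rot_rot {n : ℕ} {a : ℕ → ℕ → ZMod 2}
    (h0 : ∀ i j, ¬ InTri n i j → a i j = 0) :
    rot n (rot n (rot n a)) = a := by
  funext i j
  by_cases h : InTri n i j
  · obtain ⟨h1, h2, h3⟩ := inTri_elim h
    rw [rot_rot_apply n (rot n a) h, rot_apply n a (mk_inTri (by omega))]
    congr 1 <;> omega
  · rw [rot_outside h, h0 i j h]

lemma hrefl_rot (n : ℕ) (a : ℕ → ℕ → ZMod 2) :
    hrefl n (rot n a) = rot n (rot n (hrefl n a)) := by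
  funext i j
  by_cases h : InTri n i j
  · obtain ⟨h1, h2, h3⟩ := inTri_elim h
    rw [rot_rot_apply n (hrefl n a) h, hrefl_apply n (rot n a) h,
      rot_apply n a (mk_inTri (by omega)), hrefl_apply n a (mk_inTri (by omega))]
    congr 1 <;> omega
  · rw [hrefl_outside h, rot_outside h]

lemma rot_mem_ST {n : ℕ} {a : ℕ → ℕ → ZMod 2} (ha : a ∈ ST n) :
    rot n a ∈ ST n := by
  obtain ⟨h0, hrule⟩ := mem_ST_iff.mp ha
  refine mem_ST_iff.mpr ⟨fun i j h => if_neg h, fun i j h2 hij hjn => ?_⟩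
  rw [rot_apply n a (mk_inTri (by omega)), rot_apply n a (mk_inTri (by omega)),
    rot_apply n a (mk_inTri (by omega))]
  have e1 : j - 1 - (i - 1) + 1 = j - i + 1 := by omega
  have e2 : n - (i - 1) + 1 = n - i + 2 := by omega
  have e3 : j - (i - 1) + 1 = j - i + 2 := by omega
  rw [e1, e2, e3]
  have hr := hrule (j - i + 2) (n - i + 2) (by omega) (by omega) (by omega)
  have e4 : j - i + 2 - 1 = j - i + 1 := by omega
  have e5 : n - i + 2 - 1 = n - i + 1 := by omega
  rw [e4, e5] at hr
  exact flip2 _ _ _ hr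

lemma u_rows_zero {n : ℕ} {u : ℕ → ℕ → ZMod 2} (hu : u ∈ ST n)
    (hurow : FirstRow n u (fun _ => 1)) :
    ∀ i, 2 ≤ i → ∀ j, u i j = 0 := by
  obtain ⟨h0, hrule⟩ := mem_ST_iff.mp hu
  intro i hi
  induction i, hi using Nat.le_induction with
  | base =>
    intro j
    by_cases h : InTri n 2 j
    · obtain ⟨_, h2, h3⟩ := inTri_elim h
      rw [hrule 2 j le_rfl h2 h3]
      have e1 : u (2 - 1) (j - 1) = 1 := hurow (j - 1) (by omega) (by omega)
      have e2 : u (2 - 1) j = 1 := hurow j (by omega) h3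
      rw [e1, e2]; decide
    · exact h0 2 j h
  | succ i hi ih =>
    intro j
    by_cases h : InTri n (i + 1) j
    · obtain ⟨_, h2, h3⟩ := inTri_elim h
      rw [hrule (i + 1) j (by omega) h2 h3]
      have e : i + 1 - 1 = i := by omega
      rw [e, ih (j - 1), ih j, add_zero]
    · exact h0 (i + 1) j h

lemma hrefl_u {n : ℕ} {u : ℕ → ℕ → ZMod 2} (hu : u ∈ ST n)
    (hurow : FirstRow n u (fun _ => 1)) : hrefl n u = u := by
  funext i j
  by_cases h : InTri n i j
  · obtain ⟨h1, h2, h3⟩ := inTri_elim h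
    rw [hrefl_apply n u h]
    rcases eq_or_lt_of_le h1 with h1' | h1'
    · rw [← h1']
      rw [hurow (n - j + 1) (by omega) (by omega), hurow j (by omega) (by omega)]
    · rw [u_rows_zero hu hurow i h1' (n - j + i), u_rows_zero hu hurow i h1' j]
  · rw [hrefl_outside h, (mem_ST_iff.mp hu).1 i j h]

lemma seqSum_add (n : ℕ) (f g : ℕ → ZMod 2) :
    seqSum n (fun j => f j + g j) = seqSum n f + seqSum n g := by
  simp [seqSum, Finset.sum_add_distrib]

lemma rho_u_mem_DST {n : ℕ} {u : ℕ → ℕ → ZMod 2} (hu : u ∈ ST n)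
    (hurow : FirstRow n u (fun _ => 1)) : rho n u ∈ DST n := by
  have h0 : ∀ i j, ¬ InTri n i j → u i j = 0 := (mem_ST_iff.mp hu).1
  have h0h : ∀ i j, ¬ InTri n i j → hrefl n u i j = 0 := fun i j h => hrefl_outside h
  refine mem_DST_iff.mpr ⟨?_, ?_, ?_⟩
  · exact add_mem (add_mem (rot_mem_ST (rot_mem_ST hu)) (rot_mem_ST hu)) hu
  · rw [rho, rot_add, rot_add, rot_rot_rot h0]
    abel
  · rw [rho, hrefl_add, hrefl_add]
    have e1 : hrefl n (rot n u) = rot n (rot n (hrefl n u)) := hrefl_rot n u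
    have e2 : hrefl n (rot n (rot n u)) = rot n (rot n (hrefl n (rot n u))) :=
      hrefl_rot n (rot n u)
    have e3 : rot n (rot n (rot n (rot n (hrefl n u)))) = rot n (hrefl n u) :=
      congrArg (rot n) (rot_rot_rot h0h)
    rw [e2, e1, e3, hrefl_u hu hurow]
    abel

lemma seqSum_rho_u {n : ℕ} {u : ℕ → ℕ → ZMod 2} (hu : u ∈ ST n)
    (hurow : FirstRow n u (fun _ => 1)) (hn : n % 2 = 1) :
    seqSum n (rho n u 1) = 1 := by
  have hn1 : 1 ≤ n := by omega
  have hrow : ∀ j ∈ Finset.Icc 1 n,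
      rho n u 1 j = u (n - j + 1) (n - j + 1) + u j n + 1 := by
    intro j hj
    rw [Finset.mem_Icc] at hj
    have ht : InTri n 1 j := mk_inTri ⟨le_rfl, hj.1, hj.2⟩
    show rot n (rot n u) 1 j + rot n u 1 j + u 1 j = _
    rw [rot_rot_apply n u ht, rot_apply n u ht, hurow j hj.1 hj.2]
    have ej : j - 1 + 1 = j := by omega
    have en : n - 1 + 1 = n := by omega
    rw [ej, en]
  rw [seqSum, Finset.sum_congr rfl hrow]
  rw [Finset.sum_add_distrib, Finset.sum_add_distrib]
  have s1 : ∑ j ∈ Finset.Icc 1 n, u (n - j + 1) (n - j + 1) = 1 := by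
    rw [Finset.sum_eq_single_of_mem n (Finset.mem_Icc.mpr ⟨hn1, le_rfl⟩)]
    · have e : n - n + 1 = 1 := by omega
      rw [e]; exact hurow 1 le_rfl hn1
    · intro b hb hbn
      rw [Finset.mem_Icc] at hb
      exact u_rows_zero hu hurow (n - b + 1) (by omega) (n - b + 1)
  have s2 : ∑ j ∈ Finset.Icc 1 n, u j n = 1 := by
    rw [Finset.sum_eq_single_of_mem 1 (Finset.mem_Icc.mpr ⟨le_rfl, hn1⟩)]
    · exact hurow n hn1 le_rfl
    · intro b hb hbn
      rw [Finset.mem_Icc] at hb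
      exact u_rows_zero hu hurow b (by omega) n
  have s3 : ∑ _j ∈ Finset.Icc 1 n, (1 : ZMod 2) = 1 := by
    rw [Finset.sum_const, Nat.card_Icc]
    have e : n + 1 - 1 = n := by omega
    rw [e, nsmul_eq_mul, mul_one, ← ZMod.natCast_mod n 2, hn, Nat.cast_one]
  rw [s1, s2, s3]; decide

lemma seqSum_eq_zero_of_even {n : ℕ} {a : ℕ → ℕ → ZMod 2} (hn : n % 2 = 0)
    (ha : a ∈ DST n) : seqSum n (a 1) = 0 := by
  have hh : hrefl n a = a := (mem_DST_iff.mp ha).2.2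
  have key : ∀ j, 1 ≤ j → j ≤ n → a 1 (n - j + 1) = a 1 j := by
    intro j h1 h2
    conv_rhs => rw [← hh]
    rw [hrefl_apply n a (mk_inTri ⟨le_rfl, h1, h2⟩)]
  rw [seqSum]
  refine Finset.sum_involution (fun j _ => n - j + 1) ?_ ?_ ?_ ?_
  · intro j hj
    rw [Finset.mem_Icc] at hj
    rw [key j hj.1 hj.2]
    exact zmod2_add_self _
  · intro j hj _
    rw [Finset.mem_Icc] at hj
    show n - j + 1 ≠ j
    omega
  · intro j hj
    rw [Finset.mem_Icc] at hj
    show n - j + 1 ∈ Finset.Icc 1 n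
    rw [Finset.mem_Icc]
    omega
  · intro j hj
    rw [Finset.mem_Icc] at hj
    show n - (n - j + 1) + 1 = j
    omega

/-- Proposition 9. For `n` even, `DST(n) = DST₀(n)`; for `n`
odd, `DST(n)` is the disjoint union of `DST₀(n)` and the coset `DST₀(n) + U_n`,
where `U_n = ρ(∇((1)_n))`.  Here `u` denotes `∇((1)_n)`. -/
theorem statement14 (n : ℕ) (u : ℕ → ℕ → ZMod 2) (hu : u ∈ ST n)
    (hurow : FirstRow n u (fun _ => 1)) :
    (n % 2 = 0 → DST n = DST0 n) ∧
    (n % 2 = 1 →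
      (DST n : Set (ℕ → ℕ → ZMod 2)) =
        (DST0 n : Set (ℕ → ℕ → ZMod 2)) ∪
          ((fun a => a + rho n u) '' (DST0 n : Set (ℕ → ℕ → ZMod 2))) ∧
      Disjoint (DST0 n : Set (ℕ → ℕ → ZMod 2))
        ((fun a => a + rho n u) '' (DST0 n : Set (ℕ → ℕ → ZMod 2)))) := by
  have hρ : rho n u ∈ DST n := rho_u_mem_DST hu hurow
  have hadd : ∀ a b : ℕ → ℕ → ZMod 2,
      seqSum n ((a + b) 1) = seqSum n (a 1) + seqSum n (b 1) := by
    intro a b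
    simp [seqSum, Finset.sum_add_distrib]
  have hself : ∀ a : ℕ → ℕ → ZMod 2, a + rho n u + rho n u = a := by
    intro a
    funext i j
    simp only [Pi.add_apply]
    rw [add_assoc, zmod2_add_self, add_zero]
  constructor
  · intro hn
    ext a
    exact ⟨fun ha => mem_DST0_iff.mpr ⟨ha, seqSum_eq_zero_of_even hn ha⟩,
      fun ha => (mem_DST0_iff.mp ha).1⟩
  · intro hn
    have hσρ : seqSum n (rho n u 1) = 1 := seqSum_rho_u hu hurow hn
    constructor
    · ext a
      simp only [Set.mem_union, Set.mem_image, SetLike.mem_coe]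
      constructor
      · intro ha
        have : seqSum n (a 1) = 0 ∨ seqSum n (a 1) = 1 := by
          generalize seqSum n (a 1) = z; revert z; decide
        rcases this with h | h
        · exact Or.inl (mem_DST0_iff.mpr ⟨ha, h⟩)
        · refine Or.inr ⟨a + rho n u, mem_DST0_iff.mpr ⟨add_mem ha hρ, ?_⟩, hself a⟩
          rw [hadd, h, hσρ]; decide
      · rintro (ha | ⟨b, hb, rfl⟩)
        · exact (mem_DST0_iff.mp ha).1
        · exact add_mem (mem_DST0_iff.mp hb).1 hρ
    · rw [Set.disjoint_left]
      rintro a ha ⟨b, hb, rfl⟩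
      have h1 : seqSum n ((b + rho n u) 1) = 0 := (mem_DST0_iff.mp ha).2
      rw [hadd, (mem_DST0_iff.mp hb).2, hσρ] at h1
      exact absurd h1 (by decide)


end Steinhaus
end
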